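/- Monotonicity of the EM algorithm: let (Ω, F) be a measurable space, G a sub-σ-algebra of F, P a reference probability measure, and (P_n)_{n≥0} a sequence of probability measures on (Ω, F), each equivalent to P. Assume for every n that log(dP_{n+1}/dP_n) is P_n-integrable and that E_{P_n}[ log(dP_{n+1}/dP_n) | G ] ≥ 0 P-almost everywhere. Then for every n, E_P[ dP_{n+1}/dP | G ] ≥ E_P[ dP_n/dP | G ] P-almost everywhere; in particular the partial-observation log-likelihoods log E_P[ dP_n/dP | G ] are P-a.e. nondecreasing in n. -/

import Mathlib

open MeasureTheory

/-- monotonicity of the EM algorithm: if each EM step does not decrease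
the conditional expected log-likelihood ratio, then the partial-observation
(conditional) likelihoods are nondecreasing. -/
theorem em_monotone
    {Ω : Type*} {F : MeasurableSpace Ω} (G : MeasurableSpace Ω) (hG : G ≤ F)
    (Pref : @Measure Ω F) [IsProbabilityMeasure Pref]
    (P : ℕ → @Measure Ω F) [∀ n, IsProbabilityMeasure (P n)]
    (hPac : ∀ n, P n ≪ Pref) (hacP : ∀ n, Pref ≪ P n)
    (hint : ∀ n,
      Integrable (fun ω => Real.log (((P (n+1)).rnDeriv (P n) ω).toReal)) (P n))
    (hstep : ∀ n, ∀ᵐ ω ∂Pref,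
      0 ≤ ((P n)[fun ω => Real.log (((P (n+1)).rnDeriv (P n) ω).toReal) | G]) ω) :
    ∀ n, ∀ᵐ ω ∂Pref,
      (Pref[fun ω => ((P n).rnDeriv Pref ω).toReal | G]) ω
          ≤ (Pref[fun ω => ((P (n+1)).rnDeriv Pref ω).toReal | G]) ω
        ∧ Real.log ((Pref[fun ω => ((P n).rnDeriv Pref ω).toReal | G]) ω)
          ≤ Real.log ((Pref[fun ω => ((P (n+1)).rnDeriv Pref ω).toReal | G]) ω) := by
  intro n
  letI : MeasurableSpace Ω := F
  haveI : SigmaFinite (Pref.trim hG) := inferInstance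
  haveI : SigmaFinite ((P n).trim hG) := inferInstance
  set r : Ω → ℝ := fun ω => ((P (n+1)).rnDeriv (P n) ω).toReal with hrdef
  set fn : Ω → ℝ := fun ω => ((P n).rnDeriv Pref ω).toReal with hfndef
  set fn1 : Ω → ℝ := fun ω => ((P (n+1)).rnDeriv Pref ω).toReal with hfn1def
  have hP1n : P (n+1) ≪ P n := (hPac (n+1)).trans (hacP n)
  have hPn1 : P n ≪ P (n+1) := (hPac n).trans (hacP (n+1))
  -- r > 0 a.e. (P n)
  have hrpos : ∀ᵐ ω ∂(P n), 0 < r ω := by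
    filter_upwards [hPn1.ae_le (Measure.rnDeriv_pos hP1n),
      Measure.rnDeriv_lt_top (P (n+1)) (P n)] with ω h1 h2
    exact ENNReal.toReal_pos h1.ne' h2.ne
  have hrint : Integrable r (P n) := Measure.integrable_toReal_rnDeriv
  -- 1 ≤ E[r | G] a.e. (P n)
  have h1le : ∀ᵐ ω ∂(P n), 1 ≤ ((P n)[r|G]) ω := by
    have hlog : (fun ω => Real.log (r ω)) ≤ᵐ[P n] fun ω => r ω - 1 :=
      hrpos.mono fun ω h => Real.log_le_sub_one_of_pos h
    have hsub : Integrable (fun ω => r ω - 1) (P n) := hrint.sub (integrable_const 1)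
    have hmono := condExp_mono (m := G) (hint n) hsub hlog
    have hce : (P n)[fun ω => r ω - 1|G] =ᵐ[P n]
        fun ω => ((P n)[r|G]) ω - 1 := by
      have h2 := condExp_sub (m := G) (μ := P n) hrint (integrable_const (1 : ℝ))
      have h3 : (P n)[fun _ : Ω => (1:ℝ)|G] = fun _ => (1:ℝ) := condExp_const hG 1
      filter_upwards [h2] with ω hω
      simp [h3] at hω; exact hω
    filter_upwards [(hPac n).ae_le (hstep n), hmono, hce] with ω h0 hm hc
    have : (0:ℝ) ≤ ((P n)[r|G]) ω - 1 := le_trans h0 (hm.trans_eq hc)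
    linarith
  -- (P n) s ≤ (P (n+1)) s for G-measurable s (in toReal form)
  have hmeas : ∀ s : Set Ω, MeasurableSet[G] s →
      ((P n) s).toReal ≤ ((P (n+1)) s).toReal := by
    intro s hs
    have e1 : ∫ ω in s, ((P n)[r|G]) ω ∂(P n) = ∫ ω in s, r ω ∂(P n) :=
      setIntegral_condExp hG hrint hs
    have e2 : ∫ ω in s, r ω ∂(P n) = ((P (n+1)) s).toReal :=
      Measure.setIntegral_toReal_rnDeriv hP1n s
    have e3 : ((P n) s).toReal ≤ ∫ ω in s, ((P n)[r|G]) ω ∂(P n) := by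
      have h4 : ∫ _ in s, (1:ℝ) ∂(P n) ≤ ∫ ω in s, ((P n)[r|G]) ω ∂(P n) := by
        exact setIntegral_mono_ae ((integrable_const 1).integrableOn)
          (integrable_condExp.integrableOn) h1le
      simp at h4; exact h4
    linarith [e3.trans_eq (e1.trans e2)]
  -- set-integral identities for the conditional likelihoods
  have hfnint : Integrable fn Pref := Measure.integrable_toReal_rnDeriv
  have hfn1int : Integrable fn1 Pref := Measure.integrable_toReal_rnDeriv
  have hsetn : ∀ s : Set Ω, MeasurableSet[G] s →
      ∫ ω in s, (Pref[fn|G]) ω ∂Pref = ((P n) s).toReal := fun s hs =>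
    (setIntegral_condExp hG hfnint hs).trans (Measure.setIntegral_toReal_rnDeriv (hPac n) s)
  have hsetn1 : ∀ s : Set Ω, MeasurableSet[G] s →
      ∫ ω in s, (Pref[fn1|G]) ω ∂Pref = ((P (n+1)) s).toReal := fun s hs =>
    (setIntegral_condExp hG hfn1int hs).trans (Measure.setIntegral_toReal_rnDeriv (hPac (n+1)) s)
  -- trimmed-measure set integrals agree
  have htrim : ∀ (f : Ω → ℝ), StronglyMeasurable[G] f → ∀ s : Set Ω, MeasurableSet[G] s →
      ∫ ω in s, f ω ∂(Pref.trim hG) = ∫ ω in s, f ω ∂Pref := by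
    intro f hf s hs
    rw [restrict_trim hG Pref hs, ← integral_trim hG hf]
  -- main inequality
  have hgle : Pref[fn|G] ≤ᵐ[Pref] Pref[fn1|G] := by
    refine ae_le_of_ae_le_trim (hm := hG) ?_
    refine ae_le_of_forall_setIntegral_le
      (Integrable.trim hG integrable_condExp stronglyMeasurable_condExp)
      (Integrable.trim hG integrable_condExp stronglyMeasurable_condExp) ?_
    intro s hs _
    rw [htrim _ stronglyMeasurable_condExp s hs, htrim _ stronglyMeasurable_condExp s hs,
      hsetn s hs, hsetn1 s hs]
    exact hmeas s hs
  -- positivity of the conditional likelihood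
  have hgnn : 0 ≤ᵐ[Pref] Pref[fn|G] :=
    condExp_nonneg (ae_of_all _ fun ω => ENNReal.toReal_nonneg)
  have hgpos : ∀ᵐ ω ∂Pref, 0 < (Pref[fn|G]) ω := by
    have hs : MeasurableSet[G] ((Pref[fn|G]) ⁻¹' Set.Iic 0) :=
      (stronglyMeasurable_condExp (m := G)).measurable (measurableSet_Iic (a := (0:ℝ)))
    set s : Set Ω := (Pref[fn|G]) ⁻¹' Set.Iic 0 with hsdef
    have hzero : Pref[fn|G] =ᵐ[Pref.restrict s] 0 := by
      have h1 : ∀ᵐ ω ∂(Pref.restrict s), 0 ≤ (Pref[fn|G]) ω := ae_restrict_of_ae hgnn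
      have h2 : ∀ᵐ ω ∂(Pref.restrict s), ω ∈ s := ae_restrict_mem (hG s hs)
      filter_upwards [h1, h2] with ω hω1 hω2
      exact le_antisymm hω2 hω1
    have hint0 : ∫ ω in s, (Pref[fn|G]) ω ∂Pref = 0 := by
      rw [integral_congr_ae hzero]; simp
    have hPns : (P n) s = 0 := by
      have := (hsetn s hs).symm.trans hint0
      rcases (ENNReal.toReal_eq_zero_iff _).mp this with h | h
      · exact h
      · exact absurd h (measure_ne_top _ _)
    have hPrefs : Pref s = 0 := hacP n hPns
    have : ∀ᵐ ω ∂Pref, ω ∉ s := by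
      rw [ae_iff]
      simpa using hPrefs
    filter_upwards [this] with ω hω
    simpa [hsdef, Set.mem_preimage, not_le] using hω
  filter_upwards [hgle, hgpos] with ω h1 h2
  exact ⟨h1, Real.log_le_log h2 h1⟩
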